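/- With the coefficients c_1 = 0, c_2 = 1/6, c_3 = -1/6, c_4 = 1/12, c_5 = -1/12 and b_1 = 71/5, b_2 = 117/10, b_3 = 7/10, b_4 = -104/5, b_5 = -24/5, one has \sum_{i=1}^5 b_i c_i^k = 1/(k+1)! for every k = 0, 1, 2, 3, 4; consequently r(x) = \sum_{i=1}^5 b_i/(1 - c_i x) satisfies r(x) - \varphi_1(x) = O(x^5) as x \to 0. -/

import Mathlib

/-- The entire function `φ₁(x) = ∑ₖ xᵏ / (k+1)!` (equal to `(eˣ - 1)/x` for `x ≠ 0`). -/
noncomputable def phi1R (x : ℝ) : ℝ :=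
  ∑' k : ℕ, x ^ k / ((k + 1).factorial : ℝ)

lemma two_pow_le_fact (k : ℕ) : (2:ℕ) ^ k ≤ (k+1).factorial := by
  have := @Nat.factorial_mul_pow_le_factorial 1 k
  simpa [Nat.add_comm] using this

set_option maxHeartbeats 1000000 in
lemma summable_aux (x : ℝ) : Summable (fun k : ℕ => x ^ k / ((k + 1).factorial : ℝ)) := by
  apply Summable.of_abs
  refine Summable.of_nonneg_of_le (fun k => abs_nonneg _) (fun k => ?_)
    (Real.summable_pow_div_factorial |x|)
  rw [abs_div, abs_pow, abs_of_nonneg (by positivity : (0:ℝ) ≤ ((k+1).factorial : ℝ))]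
  apply div_le_div_of_nonneg_left (by positivity) (by positivity)
  exact_mod_cast Nat.factorial_le (Nat.le_succ k)

/-- With `c = (0, 1/6, -1/6, 1/12, -1/12)` and
`b = (71/5, 117/10, 7/10, -104/5, -24/5)`, the coefficients satisfy
`∑ᵢ bᵢ cᵢᵏ = 1/(k+1)!` for `k = 0, …, 4`, and hence
`r(x) = ∑ᵢ bᵢ/(1 - cᵢ x)` approximates `φ₁` to order 4 at the origin. -/
theorem fractional_phi1_order4_optimized_coeffs :
    let c : Fin 5 → ℝ := ![0, 1/6, -1/6, 1/12, -1/12]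
    let b : Fin 5 → ℝ := ![71/5, 117/10, 7/10, -104/5, -24/5]
    (∀ k : ℕ, k ≤ 4 → ∑ i, b i * c i ^ k = 1 / ((k + 1).factorial : ℝ)) ∧
      ∃ C > (0 : ℝ), ∃ δ > (0 : ℝ), ∀ x : ℝ, |x| < δ →
        |(∑ i, b i / (1 - c i * x)) - phi1R x| ≤ C * |x| ^ 5 := by
  intro c b
  have hcoef : ∀ k : ℕ, k ≤ 4 → ∑ i, b i * c i ^ k = 1 / ((k + 1).factorial : ℝ) := by
    intro k hk
    interval_cases k <;>
      · simp only [Fin.sum_univ_five, b, c, Matrix.cons_val_zero, Matrix.cons_val_one,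
          Matrix.head_cons, Matrix.cons_val_two, Matrix.tail_cons, Matrix.cons_val_three,
          Matrix.cons_val_four]
        norm_num [Nat.factorial]
  refine ⟨hcoef, 108, by norm_num, 1, by norm_num, ?_⟩
  intro x hx
  have hc : ∀ i, |c i| ≤ 1/6 := by
    intro i; fin_cases i <;> simp [c] <;> norm_num [abs_le]
  have hbsum : ∑ i, |b i| ≤ 53 := by
    simp only [Fin.sum_univ_five, b, Matrix.cons_val_zero, Matrix.cons_val_one,
      Matrix.head_cons, Matrix.cons_val_two, Matrix.tail_cons, Matrix.cons_val_three,
      Matrix.cons_val_four]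
    norm_num [abs_of_nonneg, abs_of_nonpos]
  have hcx : ∀ i, |c i * x| < 1 := by
    intro i
    rw [abs_mul]
    calc |c i| * |x| ≤ (1/6) * 1 :=
          mul_le_mul (hc i) hx.le (abs_nonneg x) (by norm_num)
      _ < 1 := by norm_num
  have hsumm : ∀ i, Summable (fun k : ℕ => b i * (c i * x) ^ k) := by
    intro i
    exact Summable.mul_left _ (summable_geometric_of_abs_lt_one (hcx i))
  have hr : (∑ i, b i / (1 - c i * x)) = ∑' k : ℕ, ∑ i, b i * (c i * x) ^ k := by
    rw [Summable.tsum_finsetSum (fun i _ => hsumm i)]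
    congr 1
    funext i
    rw [tsum_mul_left, tsum_geometric_of_abs_lt_one (hcx i), div_eq_mul_inv]
  have hsummouter : Summable (fun k : ℕ => ∑ i, b i * (c i * x) ^ k) :=
    summable_sum fun i _ => hsumm i
  have hphi : phi1R x = ∑' k : ℕ, x ^ k / ((k + 1).factorial : ℝ) := rfl
  rw [hr, hphi, ← Summable.tsum_sub hsummouter (summable_aux x)]
  have key : ∀ k : ℕ,
      ‖(∑ i, b i * (c i * x) ^ k) - x ^ k / ((k + 1).factorial : ℝ)‖
        ≤ 54 * (1/2 : ℝ) ^ k * |x| ^ 5 := by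
    intro k
    rw [Real.norm_eq_abs]
    rcases le_or_gt k 4 with hk | hk
    · have heq : (∑ i, b i * (c i * x) ^ k) = x ^ k / ((k + 1).factorial : ℝ) := by
        calc (∑ i, b i * (c i * x) ^ k) = (∑ i, b i * c i ^ k) * x ^ k := by
              rw [Finset.sum_mul]; congr 1; funext i; ring
          _ = x ^ k / ((k + 1).factorial : ℝ) := by rw [hcoef k hk]; ring
      rw [heq, sub_self, abs_zero]
      positivity
    · have hxk5 : |x| ^ k ≤ |x| ^ 5 :=
        pow_le_pow_of_le_one (abs_nonneg x) hx.le (by omega)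
    -- first summand
      have h1 : |∑ i, b i * (c i * x) ^ k| ≤ 53 * ((1/6 : ℝ) ^ k * |x| ^ k) := by
        calc |∑ i, b i * (c i * x) ^ k| ≤ ∑ i, |b i * (c i * x) ^ k| :=
              Finset.abs_sum_le_sum_abs _ _
          _ ≤ ∑ i, |b i| * ((1/6 : ℝ) ^ k * |x| ^ k) := by
              apply Finset.sum_le_sum
              intro i _
              rw [abs_mul, abs_pow, abs_mul, mul_pow]
              apply mul_le_mul_of_nonneg_left ?_ (abs_nonneg _)
              exact mul_le_mul_of_nonneg_right
                (pow_le_pow_left₀ (abs_nonneg _) (hc i) k) (by positivity)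
          _ = (∑ i, |b i|) * ((1/6 : ℝ) ^ k * |x| ^ k) := by rw [Finset.sum_mul]
          _ ≤ 53 * ((1/6 : ℝ) ^ k * |x| ^ k) :=
              mul_le_mul_of_nonneg_right hbsum (by positivity)
      have h2 : |x ^ k / ((k + 1).factorial : ℝ)| ≤ (1/2 : ℝ) ^ k * |x| ^ k := by
        rw [abs_div, abs_pow, abs_of_nonneg (by positivity : (0:ℝ) ≤ ((k+1).factorial : ℝ)),
          div_le_iff₀ (by positivity)]
        have h2f : ((2:ℝ)) ^ k ≤ ((k+1).factorial : ℝ) := by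
          exact_mod_cast two_pow_le_fact k
        calc |x| ^ k = (1/2:ℝ)^k * |x|^k * 2^k := by
              rw [div_pow]; field_simp; simp
          _ ≤ (1/2:ℝ)^k * |x|^k * ((k+1).factorial : ℝ) := by
              apply mul_le_mul_of_nonneg_left h2f (by positivity)
          _ = (1/2:ℝ)^k * |x|^k * ((k+1).factorial : ℝ) := rfl
      have h16 : (1/6 : ℝ) ^ k ≤ (1/2 : ℝ) ^ k :=
        pow_le_pow_left₀ (by norm_num) (by norm_num) k
      calc |(∑ i, b i * (c i * x) ^ k) - x ^ k / ((k + 1).factorial : ℝ)|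
          ≤ |∑ i, b i * (c i * x) ^ k| + |x ^ k / ((k + 1).factorial : ℝ)| :=
            abs_sub _ _
        _ ≤ 53 * ((1/6 : ℝ) ^ k * |x| ^ k) + (1/2 : ℝ) ^ k * |x| ^ k :=
            add_le_add h1 h2
        _ ≤ 54 * (1/2 : ℝ) ^ k * |x| ^ 5 := by
            have h3 : (1/6:ℝ)^k * |x|^k ≤ (1/2:ℝ)^k * |x|^5 :=
              mul_le_mul h16 hxk5 (by positivity) (by positivity)
            have h4 : (1/2:ℝ)^k * |x|^k ≤ (1/2:ℝ)^k * |x|^5 :=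
              mul_le_mul_of_nonneg_left hxk5 (by positivity)
            nlinarith [h3, h4]
  have hgeo : HasSum (fun k : ℕ => 54 * (1/2 : ℝ) ^ k * |x| ^ 5) (108 * |x| ^ 5) := by
    have h := ((hasSum_geometric_of_lt_one (by norm_num) (by norm_num : (1/2:ℝ) < 1)).mul_left
      54).mul_right (|x| ^ 5)
    rw [show (108:ℝ) = 54 * (1 - 1/2)⁻¹ by norm_num]; exact h
  calc |∑' k : ℕ, ((∑ i, b i * (c i * x) ^ k) - x ^ k / ((k + 1).factorial : ℝ))|
      ≤ 108 * |x| ^ 5 := by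
        rw [← Real.norm_eq_abs]
        exact tsum_of_norm_bounded hgeo key
    _ = 108 * |x| ^ 5 := rfl
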